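/- For every pair (a,b) ∈ ℤ_{≥0}² with a + b > 0, the Lebesgue measure of σ_{a,b} satisfies |σ_{a,b}| ≤ C ψ(h_{a,b})/h_{a,b} for an absolute constant C > 0; consequently, if ∑_{h=1}^∞ ψ(h) < ∞ then ∑_{(a,b) ∈ ℤ_{≥0}²\{0}} |σ_{a,b}| < ∞. -/

import Mathlib

open MeasureTheory Filter Set
open scoped ENNReal NNReal

/-- The set `σ_{a,b}(c) = {(x,y) ∈ [0,1]² : |a²x + b²y − c²| < ψ(h_{a,b})}`,
where `h_{a,b} = max(a,b)`. -/
def sigC (ψ : ℝ → ℝ) (a b c : ℕ) : Set (EuclideanSpace ℝ (Fin 2)) :=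
  {p | p 0 ∈ Set.Icc (0 : ℝ) 1 ∧ p 1 ∈ Set.Icc (0 : ℝ) 1 ∧
    |(a : ℝ) ^ 2 * p 0 + (b : ℝ) ^ 2 * p 1 - (c : ℝ) ^ 2| < ψ ((max a b : ℕ) : ℝ)}

/-- The set `σ_{a,b} = ⋃_{c ∈ ℤ_{≥0}} σ_{a,b}(c)`. -/
def sigU (ψ : ℝ → ℝ) (a b : ℕ) : Set (EuclideanSpace ℝ (Fin 2)) :=
  ⋃ c : ℕ, sigC ψ a b c

/-- The square `Ω = [ε,1]²`. -/
def unitSq (ε : ℝ) : Set (EuclideanSpace ℝ (Fin 2)) :=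
  {p | p 0 ∈ Set.Icc ε 1 ∧ p 1 ∈ Set.Icc ε 1}

/-- The planar model of `σ_{a,b}(c)`. -/
def stripSet (A B t δ : ℝ) : Set (ℝ × ℝ) :=
  {q : ℝ × ℝ | q.1 ∈ Icc (0:ℝ) 1 ∧ q.2 ∈ Icc (0:ℝ) 1 ∧ |A * q.1 + B * q.2 - t| < δ}

lemma measS (A B t δ : ℝ) : MeasurableSet (stripSet A B t δ) := by
  apply MeasurableSet.inter (measurable_fst measurableSet_Icc)
  apply MeasurableSet.inter (measurable_snd measurableSet_Icc)
  exact measurableSet_lt (by fun_prop : Measurable fun q : ℝ × ℝ => |A * q.1 + B * q.2 - t|)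
    measurable_const

lemma strip_bound (A B t δ : ℝ) (hA : 1 ≤ A) :
    volume (stripSet A B t δ) ≤ ENNReal.ofReal (2 * δ / A) := by
  have hA0 : (0:ℝ) < A := lt_of_lt_of_le one_pos hA
  rw [Measure.volume_eq_prod, Measure.prod_apply_symm (measS A B t δ)]
  have hbd : ∀ y : ℝ, volume ((fun x => (x, y)) ⁻¹' stripSet A B t δ) ≤
      (Icc (0:ℝ) 1).indicator (fun _ => ENNReal.ofReal (2 * δ / A)) y := by
    intro y
    by_cases hy : y ∈ Icc (0:ℝ) 1
    · rw [indicator_of_mem hy]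
      have hsub : (fun x => (x, y)) ⁻¹' stripSet A B t δ
          ⊆ Ioo ((t - B * y - δ) / A) ((t - B * y + δ) / A) := by
        rintro x ⟨hx, -, habs⟩
        rw [abs_lt] at habs
        constructor
        · rw [div_lt_iff₀ hA0]; nlinarith [habs.1]
        · rw [lt_div_iff₀ hA0]; nlinarith [habs.2]
      refine le_trans (measure_mono hsub) ?_
      rw [Real.volume_Ioo]
      apply ENNReal.ofReal_le_ofReal
      rw [div_sub_div_same]
      apply le_of_eq
      ring
    · rw [indicator_of_notMem hy]
      have : (fun x => (x, y)) ⁻¹' stripSet A B t δ = ∅ := by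
        ext x
        simp only [mem_preimage, stripSet, mem_setOf_eq, mem_empty_iff_false, iff_false]
        rintro ⟨-, hy2, -⟩
        exact hy hy2
      simp [this]
  refine le_trans (lintegral_mono hbd) ?_
  rw [lintegral_indicator measurableSet_Icc]
  simp [Real.volume_Icc]

lemma strip_bound' (A B t δ : ℝ) (hB : 1 ≤ B) :
    volume (stripSet A B t δ) ≤ ENNReal.ofReal (2 * δ / B) := by
  have hswap : stripSet A B t δ = Prod.swap ⁻¹' stripSet B A t δ := by
    ext ⟨x, y⟩
    simp only [stripSet, mem_setOf_eq, mem_preimage, Prod.swap_prod_mk]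
    constructor
    · rintro ⟨h1, h2, h3⟩; exact ⟨h2, h1, by rwa [add_comm]⟩
    · rintro ⟨h1, h2, h3⟩; exact ⟨h2, h1, by rwa [add_comm]⟩
  rw [hswap, Measure.volume_eq_prod,
    (Measure.measurePreserving_swap (μ := volume) (ν := volume)).measure_preimage
      (measS B A t δ).nullMeasurableSet, ← Measure.volume_eq_prod]
  exact strip_bound B A t δ hB

/-- The measure-preserving identification of the Euclidean plane with `ℝ × ℝ`. -/
noncomputable def φ2 : EuclideanSpace ℝ (Fin 2) → ℝ × ℝ :=
  (MeasurableEquiv.finTwoArrow : (Fin 2 → ℝ) ≃ᵐ ℝ × ℝ) ∘ ((MeasurableEquiv.toLp 2 (Fin 2 → ℝ)).symm)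

lemma φ2_mp : MeasurePreserving φ2 volume volume :=
  (volume_preserving_piFinTwo (fun _ => ℝ)).comp
    (EuclideanSpace.volume_preserving_symm_measurableEquiv_toLp (Fin 2))

lemma sigU_eq (ψ : ℝ → ℝ) (a b : ℕ) :
    sigU ψ a b = φ2 ⁻¹'
      ⋃ c : ℕ, stripSet ((a:ℝ)^2) ((b:ℝ)^2) ((c:ℝ)^2) (ψ ((max a b : ℕ) : ℝ)) := by
  rw [preimage_iUnion]
  rfl

/-- The key measure estimate with the absolute constant `C = 6`. -/
lemma main_bound (ψ : ℝ → ℝ) (hψ : ∀ x : ℝ, 0 < x → 0 < ψ x) (a b : ℕ) (hab : 0 < a + b) :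
    volume (sigU ψ a b) ≤
      ENNReal.ofReal (6 * ψ ((max a b : ℕ) : ℝ) / ((max a b : ℕ) : ℝ)) := by
  set h : ℕ := max a b with hh
  have hh1 : 1 ≤ h := by omega
  set H : ℝ := ((h : ℕ) : ℝ) with hHdef
  have hH1 : (1:ℝ) ≤ H := by rw [hHdef]; exact_mod_cast hh1
  have hH0 : (0:ℝ) < H := lt_of_lt_of_le one_pos hH1
  set δ : ℝ := ψ H with hδdef
  have hδ0 : 0 < δ := hψ H hH0
  set Sc : ℕ → Set (ℝ × ℝ) :=
    fun c => stripSet ((a:ℝ)^2) ((b:ℝ)^2) ((c:ℝ)^2) δ with hSc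
  have hvol : volume (sigU ψ a b) = volume (⋃ c : ℕ, Sc c) := by
    rw [sigU_eq]
    exact φ2_mp.measure_preimage
      (MeasurableSet.iUnion fun c => measS _ _ _ _).nullMeasurableSet
  rw [hvol]
  -- each strip has measure at most 2δ/H²
  have hstrip : ∀ c : ℕ, volume (Sc c) ≤ ENNReal.ofReal (2 * δ / H ^ 2) := by
    intro c
    rcases max_cases a b with ⟨hmax, -⟩ | ⟨hmax, -⟩
    · have ha : ((a:ℝ))^2 = H^2 := by rw [hHdef, ← hmax]
      have : (1:ℝ) ≤ (a:ℝ)^2 := by rw [ha]; nlinarith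
      calc volume (Sc c) ≤ ENNReal.ofReal (2 * δ / (a:ℝ)^2) := strip_bound _ _ _ _ this
        _ = ENNReal.ofReal (2 * δ / H^2) := by rw [ha]
    · have hb : ((b:ℝ))^2 = H^2 := by rw [hHdef, ← hmax]
      have : (1:ℝ) ≤ (b:ℝ)^2 := by rw [hb]; nlinarith
      calc volume (Sc c) ≤ ENNReal.ofReal (2 * δ / (b:ℝ)^2) := strip_bound' _ _ _ _ this
        _ = ENNReal.ofReal (2 * δ / H^2) := by rw [hb]
  by_cases hcase : H ≤ 6 * δ
  · -- trivial bound by the unit square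
    have hsub : (⋃ c : ℕ, Sc c) ⊆ Icc (0:ℝ) 1 ×ˢ Icc (0:ℝ) 1 := by
      rintro q hq
      rcases mem_iUnion.1 hq with ⟨c, hc1, hc2, -⟩
      exact ⟨hc1, hc2⟩
    refine le_trans (measure_mono hsub) ?_
    rw [Measure.volume_eq_prod, Measure.prod_prod, Real.volume_Icc]
    have h1 : (1:ℝ) ≤ 6 * δ / H := (one_le_div hH0).2 hcase
    calc ENNReal.ofReal (1 - 0) * ENNReal.ofReal (1 - 0) = ENNReal.ofReal 1 := by norm_num
      _ ≤ ENNReal.ofReal (6 * δ / H) := ENNReal.ofReal_le_ofReal h1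
  · push_neg at hcase
    -- only c < 2h contribute
    have hsub : (⋃ c : ℕ, Sc c) ⊆ ⋃ c ∈ Finset.range (2 * h), Sc c := by
      intro q hq
      rcases mem_iUnion.1 hq with ⟨c, hc⟩
      have hcb : c < 2 * h := by
        obtain ⟨⟨hx0, hx1⟩, ⟨hy0, hy1⟩, habs⟩ := hc
        rw [abs_lt] at habs
        have haH : (a:ℝ) ≤ H := by rw [hHdef]; exact_mod_cast le_max_left a b
        have hbH : (b:ℝ) ≤ H := by rw [hHdef]; exact_mod_cast le_max_right a b
        have ha0 : (0:ℝ) ≤ (a:ℝ) := Nat.cast_nonneg a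
        have hb0 : (0:ℝ) ≤ (b:ℝ) := Nat.cast_nonneg b
        have hc2 : ((c:ℝ))^2 < 3 * H^2 := by nlinarith [habs.1, habs.2]
        have : (c:ℝ) < 2 * H := by nlinarith [Nat.cast_nonneg (α := ℝ) c]
        have : (c:ℝ) < ((2 * h : ℕ) : ℝ) := by push_cast; linarith
        exact_mod_cast this
      exact mem_biUnion (Finset.mem_range.2 hcb) hc
    refine le_trans (measure_mono hsub) ?_
    refine le_trans (measure_biUnion_finset_le _ _) ?_
    calc ∑ c ∈ Finset.range (2 * h), volume (Sc c)
        ≤ ∑ _c ∈ Finset.range (2 * h), ENNReal.ofReal (2 * δ / H ^ 2) :=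
          Finset.sum_le_sum fun c _ => hstrip c
      _ = ((2 * h : ℕ) : ℝ≥0∞) * ENNReal.ofReal (2 * δ / H ^ 2) := by
          rw [Finset.sum_const, Finset.card_range, nsmul_eq_mul]
      _ = ENNReal.ofReal (((2 * h : ℕ) : ℝ)) * ENNReal.ofReal (2 * δ / H ^ 2) := by
          rw [ENNReal.ofReal_natCast]
      _ = ENNReal.ofReal (((2 * h : ℕ) : ℝ) * (2 * δ / H ^ 2)) := by
          rw [ENNReal.ofReal_mul (by positivity)]
      _ ≤ ENNReal.ofReal (6 * δ / H) := by
          apply ENNReal.ofReal_le_ofReal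
          have : ((2 * h : ℕ) : ℝ) = 2 * H := by push_cast; ring
          rw [this]
          have e : 2 * H * (2 * δ / H ^ 2) = 4 * δ / H := by field_simp; ring
          rw [e]
          gcongr
          linarith

/-- Summability of the measure bounds. -/
lemma sum_bound (ψ : ℝ → ℝ) (hψ : ∀ x : ℝ, 0 < x → 0 < ψ x)
    (hsum : Summable (fun h : ℕ => ψ ((h : ℝ) + 1))) :
    ∑' p : {p : ℕ × ℕ // p ≠ (0, 0)}, volume (sigU ψ p.1.1 p.1.2) < ⊤ := by
  classical
  -- dominating function on all of ℕ × ℕ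
  set G : ℕ × ℕ → ℝ≥0∞ := fun p =>
    if p.2 ≤ p.1 ∧ 1 ≤ p.1 then ENNReal.ofReal (6 * ψ ((p.1 : ℝ)) / (p.1 : ℝ)) else 0 with hG
  set F : ℕ × ℕ → ℝ≥0∞ := fun p => G p + G p.swap with hF
  have hdom : ∀ p : {p : ℕ × ℕ // p ≠ (0, 0)}, volume (sigU ψ p.1.1 p.1.2) ≤ F p.1 := by
    rintro ⟨⟨a, b⟩, hp⟩
    have hab : 0 < a + b := by
      rcases Nat.eq_zero_or_pos (a + b) with h0 | h0
      · exact absurd (by simpa using (Prod.ext_iff.2 ⟨by omega, by omega⟩ : (a, b) = (0,0))) hp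
      · exact h0
    refine le_trans (main_bound ψ hψ a b hab) ?_
    rcases le_or_gt b a with hba | hba
    · have hmax : max a b = a := max_eq_left hba
      have ha1 : 1 ≤ a := by omega
      have : G (a, b) = ENNReal.ofReal (6 * ψ ((a : ℝ)) / (a : ℝ)) := by
        simp [hG, hba, ha1]
      rw [hmax]
      calc ENNReal.ofReal (6 * ψ ((a:ℕ) : ℝ) / ((a:ℕ) : ℝ)) = G (a, b) := by rw [this]
        _ ≤ F (a, b) := le_self_add
    · have hmax : max a b = b := max_eq_right (le_of_lt hba)
      have hb1 : 1 ≤ b := by omega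
      have : G ((a, b) : ℕ × ℕ).swap = ENNReal.ofReal (6 * ψ ((b : ℝ)) / (b : ℝ)) := by
        simp [hG, Prod.swap, le_of_lt hba, hb1]
      rw [hmax]
      calc ENNReal.ofReal (6 * ψ ((b:ℕ) : ℝ) / ((b:ℕ) : ℝ)) = G ((a,b) : ℕ × ℕ).swap := by
            rw [this]
        _ ≤ F (a, b) := le_add_self
  -- sum of G over all pairs is finite
  have hGsum : ∑' p : ℕ × ℕ, G p < ⊤ := by
    rw [ENNReal.tsum_prod']
    have hrow : ∀ a : ℕ, (∑' b : ℕ, G (a, b)) =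
        if 1 ≤ a then ((a + 1 : ℕ) : ℝ≥0∞) * ENNReal.ofReal (6 * ψ ((a : ℝ)) / (a : ℝ))
        else 0 := by
      intro a
      by_cases ha : 1 ≤ a
      · rw [if_pos ha]
        have : ∀ b : ℕ, b ∉ Finset.range (a + 1) → G (a, b) = 0 := by
          intro b hb
          rw [Finset.mem_range] at hb
          simp only [hG]
          rw [if_neg]
          push_neg
          intro hba
          omega
        rw [tsum_eq_sum this]
        have : ∀ b ∈ Finset.range (a + 1),
            G (a, b) = ENNReal.ofReal (6 * ψ ((a : ℝ)) / (a : ℝ)) := by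
          intro b hb
          rw [Finset.mem_range] at hb
          simp only [hG]
          rw [if_pos ⟨by omega, ha⟩]
        rw [Finset.sum_congr rfl this, Finset.sum_const, Finset.card_range, nsmul_eq_mul]
      · rw [if_neg ha]
        have : ∀ b : ℕ, G (a, b) = 0 := by
          intro b
          simp only [hG]
          rw [if_neg]
          push_neg
          intro _
          omega
        simp [this]
    calc (∑' a : ℕ, ∑' b : ℕ, G (a, b))
        ≤ ∑' a : ℕ, (if 1 ≤ a then ENNReal.ofReal (12 * ψ ((a : ℝ))) else 0) := by
          apply ENNReal.tsum_le_tsum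
          intro a
          rw [hrow a]
          by_cases ha : 1 ≤ a
          · rw [if_pos ha, if_pos ha]
            have ha0 : (0:ℝ) < (a : ℝ) := by exact_mod_cast ha
            have hψa : 0 < ψ ((a : ℝ)) := hψ _ ha0
            calc ((a + 1 : ℕ) : ℝ≥0∞) * ENNReal.ofReal (6 * ψ ((a : ℝ)) / (a : ℝ))
                = ENNReal.ofReal (((a + 1 : ℕ) : ℝ)) *
                    ENNReal.ofReal (6 * ψ ((a : ℝ)) / (a : ℝ)) := by
                  rw [ENNReal.ofReal_natCast]
              _ = ENNReal.ofReal (((a + 1 : ℕ) : ℝ) * (6 * ψ ((a : ℝ)) / (a : ℝ))) := by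
                  rw [ENNReal.ofReal_mul (by positivity)]
              _ ≤ ENNReal.ofReal (12 * ψ ((a : ℝ))) := by
                  apply ENNReal.ofReal_le_ofReal
                  have h1 : ((a + 1 : ℕ) : ℝ) ≤ 2 * (a : ℝ) := by
                    push_cast
                    have : (1:ℝ) ≤ (a : ℝ) := by exact_mod_cast ha
                    linarith
                  calc ((a + 1 : ℕ) : ℝ) * (6 * ψ ((a : ℝ)) / (a : ℝ))
                      ≤ 2 * (a : ℝ) * (6 * ψ ((a : ℝ)) / (a : ℝ)) := by
                        apply mul_le_mul_of_nonneg_right h1 (by positivity)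
                    _ = 12 * ψ ((a : ℝ)) := by field_simp; ring
          · rw [if_neg ha, if_neg ha]
      _ = ∑' a : ℕ, ENNReal.ofReal (12 * ψ (((a : ℝ) + 1))) := by
          rw [← Function.Injective.tsum_eq (f := fun a : ℕ =>
            (if 1 ≤ a then ENNReal.ofReal (12 * ψ ((a : ℝ))) else 0)) Nat.succ_injective]
          · apply tsum_congr
            intro a
            simp only [Nat.succ_eq_add_one]
            rw [if_pos (by omega)]
            push_cast
            ring_nf
          · intro a ha
            simp only [Function.mem_support, ne_eq] at ha
            rcases Nat.eq_zero_or_pos a with rfl | hpos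
            · simp at ha
            · exact ⟨a - 1, by omega⟩
      _ < ⊤ := by
          rw [← ENNReal.ofReal_tsum_of_nonneg (fun a => by
              have : (0:ℝ) < ψ ((a : ℝ) + 1) := hψ _ (by positivity)
              positivity)
            (hsum.mul_left 12)]
          exact ENNReal.ofReal_lt_top
  have hFsum : ∑' p : ℕ × ℕ, F p < ⊤ := by
    rw [hF]
    rw [ENNReal.tsum_add]
    have hswap : ∑' p : ℕ × ℕ, G p.swap = ∑' p : ℕ × ℕ, G p :=
      (Equiv.prodComm ℕ ℕ).tsum_eq G
    rw [hswap]
    exact ENNReal.add_lt_top.2 ⟨hGsum, hGsum⟩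
  calc ∑' p : {p : ℕ × ℕ // p ≠ (0, 0)}, volume (sigU ψ p.1.1 p.1.2)
      ≤ ∑' p : {p : ℕ × ℕ // p ≠ (0, 0)}, F p.1 := ENNReal.tsum_le_tsum hdom
    _ ≤ ∑' p : ℕ × ℕ, F p := ENNReal.tsum_comp_le_tsum_of_injective Subtype.val_injective F
    _ < ⊤ := hFsum

/-- For every pair `(a,b) ∈ ℤ_{≥0}²` with `a + b > 0` one has
`|σ_{a,b}| ≤ C ψ(h_{a,b})/h_{a,b}` for an absolute constant `C > 0`; consequently,
if `∑_{h=1}^∞ ψ(h) < ∞` then `∑_{(a,b) ≠ 0} |σ_{a,b}| < ∞`. -/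
theorem sigU_volume_le_and_summable :
    (∃ C : ℝ, 0 < C ∧
      ∀ ψ : ℝ → ℝ,
        (∀ x : ℝ, 0 < x → 0 < ψ x) →
        AntitoneOn ψ (Set.Ioi 0) →
        Tendsto ψ atTop (nhds 0) →
        ∀ a b : ℕ, 0 < a + b →
          volume (sigU ψ a b) ≤
            ENNReal.ofReal (C * ψ ((max a b : ℕ) : ℝ) / ((max a b : ℕ) : ℝ))) ∧
    (∀ ψ : ℝ → ℝ,
      (∀ x : ℝ, 0 < x → 0 < ψ x) →
      AntitoneOn ψ (Set.Ioi 0) →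
      Tendsto ψ atTop (nhds 0) →
      Summable (fun h : ℕ => ψ ((h : ℝ) + 1)) →
        ∑' p : {p : ℕ × ℕ // p ≠ (0, 0)}, volume (sigU ψ p.1.1 p.1.2) < ⊤) := by
  constructor
  · exact ⟨6, by norm_num, fun ψ hψ _ _ a b hab => main_bound ψ hψ a b hab⟩
  · exact fun ψ hψ _ _ hsum => sum_bound ψ hψ hsum
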